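/- Let A be an N×N real matrix, σ an N×d real matrix, and suppose the Kalman-type condition Span{columns of σ, columns of Aσ} = ℝᴺ holds. Then for every t > 0 the Gramian Σ̂(t) = ∫₀ᵗ e^{−sA} σσᵀ e^{−sAᵀ} ds is positive definite. -/

import Mathlib

open Matrix MeasureTheory

/-- The controllability Gramian `Σ̂(t) = ∫₀ᵗ e^{−sA} σσᵀ e^{−sAᵀ} ds`
(entrywise integral). -/
noncomputable def gramian (N d : ℕ) (A : Matrix (Fin N) (Fin N) ℝ)
    (σ : Matrix (Fin N) (Fin d) ℝ) (t : ℝ) : Matrix (Fin N) (Fin N) ℝ :=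
  Matrix.of fun i j =>
    ∫ s in (0 : ℝ)..t,
      (NormedSpace.exp ((-s) • A) * (σ * σᵀ) * NormedSpace.exp ((-s) • Aᵀ)) i j

lemma exp_smul_continuous {N : ℕ} (M : Matrix (Fin N) (Fin N) ℝ) :
    Continuous fun s : ℝ => NormedSpace.exp (s • M) := by
  letI : SeminormedRing (Matrix (Fin N) (Fin N) ℝ) := Matrix.linftyOpSemiNormedRing
  letI : NormedRing (Matrix (Fin N) (Fin N) ℝ) := Matrix.linftyOpNormedRing
  letI : NormedAlgebra ℝ (Matrix (Fin N) (Fin N) ℝ) := Matrix.linftyOpNormedAlgebra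
  exact continuous_iff_continuousAt.2 fun s => (hasDerivAt_exp_smul_const' M s).continuousAt

lemma exp_mulVec_hasDerivAt {N d : ℕ} (B : Matrix (Fin N) (Fin N) ℝ)
    (σ' : Matrix (Fin d) (Fin N) ℝ) (x : Fin N → ℝ) :
    HasDerivAt (fun s : ℝ => (σ' * NormedSpace.exp (s • B)) *ᵥ x) ((σ' * B) *ᵥ x) 0 := by
  letI : NormedAddCommGroup (Matrix (Fin N) (Fin N) ℝ) := Matrix.linftyOpNormedAddCommGroup
  letI : NormedRing (Matrix (Fin N) (Fin N) ℝ) := Matrix.linftyOpNormedRing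
  letI : NormedAlgebra ℝ (Matrix (Fin N) (Fin N) ℝ) := Matrix.linftyOpNormedAlgebra
  have hexp : HasDerivAt (fun s : ℝ => NormedSpace.exp (s • B))
      (B * NormedSpace.exp ((0:ℝ) • B)) 0 := hasDerivAt_exp_smul_const' B (0:ℝ)
  let ψ : Matrix (Fin N) (Fin N) ℝ →ₗ[ℝ] (Fin d → ℝ) :=
    { toFun := fun M => (σ' * M) *ᵥ x
      map_add' := by intro M₁ M₂; simp [Matrix.mul_add, Matrix.add_mulVec]
      map_smul' := by intro c M; simp [Matrix.mul_smul, Matrix.smul_mulVec] }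
  have h := (ψ.toContinuousLinearMap.hasFDerivAt).comp_hasDerivAt 0 hexp
  simp [ψ, NormedSpace.exp_zero] at h
  exact h

/-- Under the Kalman-type condition
`Span{columns of σ, columns of Aσ} = ℝᴺ`, the Gramian
`Σ̂(t) = ∫₀ᵗ e^{−sA} σσᵀ e^{−sAᵀ} ds` is positive definite for every `t > 0`. -/
theorem gramian_posDef (N d : ℕ) (A : Matrix (Fin N) (Fin N) ℝ)
    (σ : Matrix (Fin N) (Fin d) ℝ)
    (hKalman : Submodule.span ℝ
        ((Set.range fun j : Fin d => fun i : Fin N => σ i j) ∪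
          (Set.range fun j : Fin d => fun i : Fin N => (A * σ) i j)) = ⊤)
    (t : ℝ) (ht : 0 < t) :
    (gramian N d A σ t).PosDef := by
  -- notation
  set C : ℝ → Matrix (Fin d) (Fin N) ℝ :=
    fun s => σᵀ * NormedSpace.exp (s • (-Aᵀ)) with hCdef
  set E : ℝ → Matrix (Fin N) (Fin N) ℝ :=
    fun s => NormedSpace.exp ((-s) • A) * (σ * σᵀ) * NormedSpace.exp ((-s) • Aᵀ) with hEdef
  have hsm : ∀ (s : ℝ) (M : Matrix (Fin N) (Fin N) ℝ), (-s) • M = s • (-M) := by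
    intro s M; rw [smul_neg, neg_smul]
  have hE : ∀ s, E s = (C s)ᵀ * C s := by
    intro s
    have h1 : (C s)ᵀ = NormedSpace.exp ((-s) • A) * σ := by
      rw [hCdef]
      rw [Matrix.transpose_mul, ← Matrix.exp_transpose, Matrix.transpose_smul,
        Matrix.transpose_neg, Matrix.transpose_transpose, Matrix.transpose_transpose,
        hsm s A]
    have h2 : C s = σᵀ * NormedSpace.exp ((-s) • Aᵀ) := by
      show σᵀ * NormedSpace.exp (s • (-Aᵀ)) = _
      rw [hsm s Aᵀ]
    show NormedSpace.exp ((-s) • A) * (σ * σᵀ) *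
        NormedSpace.exp ((-s) • Aᵀ) = (C s)ᵀ * C s
    rw [h1, h2]
    simp [Matrix.mul_assoc]
  have hC_cont : Continuous C := continuous_const.matrix_mul (exp_smul_continuous (-Aᵀ))
  have hE_cont : Continuous E := by
    have : E = fun s => (C s)ᵀ * C s := funext hE
    rw [this]
    exact (hC_cont.matrix_transpose).matrix_mul hC_cont
  have hint : ∀ i j, IntervalIntegrable (fun s => E s i j) volume 0 t :=
    fun i j => ((hE_cont.matrix_elem i j).intervalIntegrable 0 t)
  have hEsymm : ∀ s, (E s)ᵀ = E s := by
    intro s; rw [hE s, Matrix.transpose_mul, Matrix.transpose_transpose]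
  rw [Matrix.posDef_iff_dotProduct_mulVec]
  constructor
  · -- Hermitian
    ext i j
    simp only [Matrix.conjTranspose_apply, star_trivial, gramian, Matrix.of_apply]
    congr 1
    funext s
    conv_lhs => rw [show (NormedSpace.exp ((-s) • A) * (σ * σᵀ) *
      NormedSpace.exp ((-s) • Aᵀ)) = E s from rfl]
    conv_rhs => rw [show (NormedSpace.exp ((-s) • A) * (σ * σᵀ) *
      NormedSpace.exp ((-s) • Aᵀ)) = E s from rfl]
    conv_rhs => rw [← hEsymm s]
    rfl
  · intro x hx
    have hstar : star x = x := funext fun i => rfl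
    rw [hstar]
    -- quadratic form as an integral
    have hquad : x ⬝ᵥ (gramian N d A σ t *ᵥ x) = ∫ s in (0:ℝ)..t, x ⬝ᵥ (E s *ᵥ x) := by
      simp only [gramian, dotProduct, Matrix.mulVec, Matrix.of_apply]
      have e1 : ∀ i, (∑ j, (∫ s in (0:ℝ)..t, E s i j) * x j)
          = ∫ s in (0:ℝ)..t, ∑ j, E s i j * x j := by
        intro i
        rw [intervalIntegral.integral_finset_sum (fun j _ => (hint i j).mul_const (x j))]
        simp_rw [intervalIntegral.integral_mul_const]
      have e2 : ∀ i, x i * (∫ s in (0:ℝ)..t, ∑ j, E s i j * x j)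
          = ∫ s in (0:ℝ)..t, x i * ∑ j, E s i j * x j := by
        intro i
        rw [intervalIntegral.integral_const_mul]
      simp_rw [show ∀ s i j, (NormedSpace.exp ((-s) • A) * (σ * σᵀ) *
        NormedSpace.exp ((-s) • Aᵀ)) i j = E s i j from fun _ _ _ => rfl, e1, e2]
      exact (intervalIntegral.integral_finset_sum (fun i _ =>
        (continuous_const.mul (continuous_finset_sum _ fun j _ =>
          (hE_cont.matrix_elem i j).mul continuous_const)).intervalIntegrable 0 t)).symm
    set g : ℝ → (Fin d → ℝ) := fun s => C s *ᵥ x with hgdef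
    have hg_cont : Continuous g := hC_cont.matrix_mulVec continuous_const
    have hpt : ∀ s, x ⬝ᵥ (E s *ᵥ x) = g s ⬝ᵥ g s := by
      intro s
      rw [hE s, ← Matrix.mulVec_mulVec, Matrix.dotProduct_mulVec, Matrix.vecMul_transpose]
    have hh_cont : Continuous fun s => g s ⬝ᵥ g s := by
      have : (fun s => g s ⬝ᵥ g s) = fun s => ∑ j, g s j * g s j := rfl
      rw [this]
      exact continuous_finset_sum _ fun j _ =>
        ((continuous_apply j).comp hg_cont).mul ((continuous_apply j).comp hg_cont)
    rw [hquad]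
    simp_rw [hpt]
    have hnonneg : ∀ s, 0 ≤ g s ⬝ᵥ g s := fun s =>
      Finset.sum_nonneg fun j _ => mul_self_nonneg _
    refine lt_of_le_of_ne (intervalIntegral.integral_nonneg ht.le fun s _ => hnonneg s) ?_
    intro heq
    apply hx
    -- from vanishing integral, g vanishes on [0, t]
    have hInt : IntervalIntegrable (fun s => g s ⬝ᵥ g s) volume 0 t :=
      hh_cont.intervalIntegrable 0 t
    have hae : (fun s => g s ⬝ᵥ g s) =ᵐ[volume.restrict (Set.Ioc 0 t)] 0 :=
      (intervalIntegral.integral_eq_zero_iff_of_le_of_nonneg_ae ht.le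
        (Filter.Eventually.of_forall fun s => hnonneg s) hInt).mp heq.symm
    have hEqOn : Set.EqOn (fun s => g s ⬝ᵥ g s) 0 (Set.Ioc 0 t) := by
      apply Measure.eqOn_of_ae_eq hae hh_cont.continuousOn continuousOn_const
      rw [interior_Ioc, closure_Ioo ht.ne]
      exact Set.Ioc_subset_Icc_self
    have hg0 : Set.EqOn g 0 (Set.Ioc 0 t) := by
      intro s hs
      have h1 : g s ⬝ᵥ g s = 0 := hEqOn hs
      exact dotProduct_self_eq_zero.mp h1
    have hg0' : Set.EqOn g 0 (Set.Icc 0 t) := by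
      have := hg0.closure hg_cont continuous_const
      rwa [closure_Ioc ht.ne] at this
    have h0mem : (0:ℝ) ∈ Set.Icc (0:ℝ) t := Set.left_mem_Icc.mpr ht.le
    -- value at 0 : σᵀ x = 0
    have hσ : σᵀ *ᵥ x = 0 := by
      have := hg0' h0mem
      simpa [hgdef, hCdef, NormedSpace.exp_zero] using this
    -- derivative at 0 : (Aσ)ᵀ x = 0
    have hd : HasDerivAt g ((σᵀ * (-Aᵀ)) *ᵥ x) 0 := exp_mulVec_hasDerivAt (-Aᵀ) σᵀ x
    have hzero : HasDerivWithinAt g 0 (Set.Icc 0 t) 0 :=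
      (hasDerivWithinAt_const 0 _ (0 : Fin d → ℝ)).congr
        (fun y hy => hg0' hy) (hg0' h0mem)
    have huniq : (σᵀ * (-Aᵀ)) *ᵥ x = 0 :=
      UniqueDiffWithinAt.eq_deriv _ ((uniqueDiffOn_Icc ht) 0 h0mem)
        hd.hasDerivWithinAt hzero
    have hAσ : (A * σ)ᵀ *ᵥ x = 0 := by
      have : -((A * σ)ᵀ *ᵥ x) = 0 := by
        rw [← huniq, Matrix.transpose_mul, Matrix.mul_neg, Matrix.neg_mulVec]
      simpa [neg_eq_zero] using this
    -- Kalman condition forces x = 0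
    let φ : (Fin N → ℝ) →ₗ[ℝ] ℝ :=
      { toFun := fun y => y ⬝ᵥ x
        map_add' := fun y z => add_dotProduct y z x
        map_smul' := fun c y => smul_dotProduct c y x }
    have hker : Submodule.span ℝ
        ((Set.range fun j : Fin d => fun i : Fin N => σ i j) ∪
          (Set.range fun j : Fin d => fun i : Fin N => (A * σ) i j)) ≤ LinearMap.ker φ := by
      rw [Submodule.span_le]
      rintro y (⟨j, rfl⟩ | ⟨j, rfl⟩) <;> simp only [SetLike.mem_coe, LinearMap.mem_ker]
      · have := congrFun hσ j
        simpa [φ, Matrix.mulVec, dotProduct, mul_comm] using this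
      · have := congrFun hAσ j
        simpa [φ, Matrix.mulVec, dotProduct, mul_comm] using this
    rw [hKalman, top_le_iff] at hker
    have hxker : x ∈ LinearMap.ker φ := by rw [hker]; trivial
    have hxx : x ⬝ᵥ x = 0 := hxker
    exact dotProduct_self_eq_zero.mp hxx
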